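/- arXiv:math/0511739 — 2 statements merged into one kernel-verified Lean document; each statement's English description precedes it below -/
import Mathlib

section
/- Let d ≥ 1 be an integer, 0 < α ≤ 2, 0 < β ≤ 1 with α/β ≤ d < α(1+β)/β. Let q : ℝ^d → [0,∞) be measurable with q(x) ≤ c₂/(1+‖x‖^{d+α}) for some c₂ > 0, and set p_t(x) = t^{−d/α} q(t^{−1/α} x) for t > 0. Fix γ with 0 < γ < 1+β−(d/α)β and set p = (1+β)/(1+β−γ). Then ∫_{ℝ^d} ( ∫_0^1 p_s(x)^p ds )^{(1+β)/p} dx < ∞. -/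
open MeasureTheory

/-- The density at time `t` of a self-similar transition kernel on `ℝ^d`:
`p_t(x) = t^{−d/α} q(t^{−1/α} x)`. -/
noncomputable def pker (d : ℕ) (α : ℝ) (q : EuclideanSpace ℝ (Fin d) → ℝ) (t : ℝ)
    (x : EuclideanSpace ℝ (Fin d)) : ℝ :=
  t ^ (-(d : ℝ) / α) * q ((t ^ (-(1 : ℝ) / α)) • x)

open Metric Set Real Module

lemma aux_ball_finite {E : Type*} [NormedAddCommGroup E] [NormedSpace ℝ E]
    [MeasurableSpace E] [BorelSpace E] [FiniteDimensional ℝ E]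
    (μ : Measure E) [μ.IsAddHaarMeasure] {t : ℝ} (ht : 0 < t)
    (htd : t < finrank ℝ E) :
    ∫⁻ x in Metric.ball (0:E) 1, ENNReal.ofReal (‖x‖ ^ (-t)) ∂μ < ⊤ := by
  have h_meas : Measurable fun x : E => ‖x‖ ^ (-t) := by fun_prop
  have h_nn : ∀ x : E, 0 ≤ ‖x‖ ^ (-t) := fun x => Real.rpow_nonneg (norm_nonneg x) _
  set ν := μ.restrict (Metric.ball (0:E) 1) with hν
  have hb : ν univ < ⊤ := by
    rw [Measure.restrict_apply_univ]; exact measure_ball_lt_top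
  rw [show (∫⁻ x in Metric.ball (0:E) 1, ENNReal.ofReal (‖x‖ ^ (-t)) ∂μ)
      = ∫⁻ x, ENNReal.ofReal (‖x‖ ^ (-t)) ∂ν from rfl,
    lintegral_eq_lintegral_meas_le ν (Filter.Eventually.of_forall h_nn) h_meas.aemeasurable]
  have hsub : ∀ u : ℝ, 0 < u →
      {a : E | u ≤ ‖a‖ ^ (-t)} ⊆ Metric.closedBall 0 (u ^ (-t)⁻¹) := by
    intro u hu a ha
    simp only [mem_setOf_eq] at ha
    rcases eq_or_ne a 0 with rfl | h0
    · simp only [norm_zero] at ha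
      rw [Real.zero_rpow (by simp [ht.ne'] : -t ≠ 0)] at ha
      exact absurd (hu.trans_le ha) (lt_irrefl 0)
    · rw [mem_closedBall_zero_iff]
      exact (Real.le_rpow_inv_iff_of_neg (norm_pos_iff.mpr h0) hu
        (neg_lt_zero.mpr ht)).mpr ha
  calc ∫⁻ u in Ioi (0:ℝ), ν {a : E | u ≤ ‖a‖ ^ (-t)}
      ≤ ∫⁻ u in Ioc (0:ℝ) 1 ∪ Ioi 1, ν {a : E | u ≤ ‖a‖ ^ (-t)} :=
        lintegral_mono_set Ioi_subset_Ioc_union_Ioi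
    _ ≤ (∫⁻ u in Ioc (0:ℝ) 1, ν {a : E | u ≤ ‖a‖ ^ (-t)})
        + ∫⁻ u in Ioi (1:ℝ), ν {a : E | u ≤ ‖a‖ ^ (-t)} := lintegral_union_le _ _ _
    _ < ⊤ := by
        refine ENNReal.add_lt_top.2 ⟨?_, ?_⟩
        · calc (∫⁻ u in Ioc (0:ℝ) 1, ν {a : E | u ≤ ‖a‖ ^ (-t)})
              ≤ ∫⁻ _ in Ioc (0:ℝ) 1, ν univ := by
                refine setLIntegral_mono' measurableSet_Ioc fun u _ => ?_
                exact measure_mono (subset_univ _)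
            _ = ν univ * volume (Ioc (0:ℝ) 1) := by rw [setLIntegral_const]
            _ < ⊤ := by
                apply ENNReal.mul_lt_top hb
                simp [Real.volume_Ioc]
        · have hbd : ∀ u ∈ Ioi (1:ℝ), ν {a : E | u ≤ ‖a‖ ^ (-t)}
              ≤ ENNReal.ofReal (u ^ (-(finrank ℝ E / t))) * μ (Metric.ball 0 1) := by
            intro u hu
            have hu0 : (0:ℝ) < u := lt_trans one_pos hu
            calc ν {a : E | u ≤ ‖a‖ ^ (-t)}
                ≤ μ (Metric.closedBall 0 (u ^ (-t)⁻¹)) :=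
                  le_trans (Measure.restrict_apply_le _ _) (measure_mono (hsub u hu0))
              _ = ENNReal.ofReal ((u ^ (-t)⁻¹) ^ finrank ℝ E) * μ (Metric.ball 0 1) :=
                  μ.addHaar_closedBall _ (by positivity)
              _ = ENNReal.ofReal (u ^ (-(finrank ℝ E / t))) * μ (Metric.ball 0 1) := by
                  congr 1
                  rw [← Real.rpow_natCast (u ^ (-t)⁻¹), ← Real.rpow_mul hu0.le]
                  congr 1
                  rw [inv_neg, neg_mul, div_eq_inv_mul]
          calc (∫⁻ u in Ioi (1:ℝ), ν {a : E | u ≤ ‖a‖ ^ (-t)})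
              ≤ ∫⁻ u in Ioi (1:ℝ),
                  ENNReal.ofReal (u ^ (-(finrank ℝ E / t))) * μ (Metric.ball 0 1) :=
                setLIntegral_mono' measurableSet_Ioi hbd
            _ = (∫⁻ u in Ioi (1:ℝ), ENNReal.ofReal (u ^ (-(finrank ℝ E / t))))
                  * μ (Metric.ball 0 1) := lintegral_mul_const' _ _ measure_ball_lt_top.ne
            _ < ⊤ := by
                apply ENNReal.mul_lt_top _ measure_ball_lt_top
                refine IntegrableOn.setLIntegral_lt_top ?_
                apply integrableOn_Ioi_rpow_of_lt _ one_pos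
                rw [neg_lt_neg_iff, lt_div_iff₀ ht, one_mul]
                exact htd

lemma pker_nonneg {d : ℕ} {α : ℝ} {q : EuclideanSpace ℝ (Fin d) → ℝ}
    (hq0 : ∀ x, 0 ≤ q x) {s : ℝ} (hs : 0 ≤ s) (x : EuclideanSpace ℝ (Fin d)) :
    0 ≤ pker d α q s x :=
  mul_nonneg (Real.rpow_nonneg hs _) (hq0 _)

lemma pker_le_const {d : ℕ} {α c₂ : ℝ} {q : EuclideanSpace ℝ (Fin d) → ℝ} (hα0 : 0 < α)
    (hc₂ : 0 < c₂) (hq : ∀ x, q x ≤ c₂ / (1 + ‖x‖ ^ ((d : ℝ) + α)))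
    (x : EuclideanSpace ℝ (Fin d)) {s : ℝ} (hs : 0 < s) :
    pker d α q s x ≤ c₂ * s ^ (-(d:ℝ)/α) := by
  unfold pker
  have h1 : q ((s ^ (-(1:ℝ)/α)) • x) ≤ c₂ := by
    refine le_trans (hq _) (div_le_self hc₂.le ?_)
    nlinarith [Real.rpow_nonneg (norm_nonneg ((s ^ (-(1:ℝ)/α)) • x)) ((d:ℝ)+α)]
  calc s ^ (-(d:ℝ)/α) * q ((s ^ (-(1:ℝ)/α)) • x) ≤ s ^ (-(d:ℝ)/α) * c₂ :=
        mul_le_mul_of_nonneg_left h1 (Real.rpow_nonneg hs.le _)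
    _ = c₂ * s ^ (-(d:ℝ)/α) := mul_comm _ _

lemma pker_le_decay {d : ℕ} {α c₂ : ℝ} {q : EuclideanSpace ℝ (Fin d) → ℝ} (hα0 : 0 < α)
    (hc₂ : 0 < c₂) (hq : ∀ x, q x ≤ c₂ / (1 + ‖x‖ ^ ((d : ℝ) + α)))
    {x : EuclideanSpace ℝ (Fin d)} (hx : x ≠ 0) {s : ℝ} (hs : 0 < s) :
    pker d α q s x ≤ c₂ * s * ‖x‖ ^ (-((d:ℝ)+α)) := by
  set A := (d:ℝ) + α with hA
  set c := s ^ (-(1:ℝ)/α) with hc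
  have hc0 : 0 < c := Real.rpow_pos_of_pos hs _
  have hm0 : 0 < ‖x‖ := norm_pos_iff.mpr hx
  have hnorm : ‖c • x‖ = c * ‖x‖ := by
    rw [norm_smul, Real.norm_of_nonneg hc0.le]
  have hu0 : 0 < (c * ‖x‖) ^ A := Real.rpow_pos_of_pos (by positivity) _
  have hq1 : q (c • x) ≤ c₂ * (c * ‖x‖) ^ (-A) := by
    refine le_trans (hq _) ?_
    rw [hnorm, Real.rpow_neg (by positivity), ← div_eq_mul_inv]
    gcongr
    linarith
  calc pker d α q s x = s ^ (-(d:ℝ)/α) * q (c • x) := rfl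
    _ ≤ s ^ (-(d:ℝ)/α) * (c₂ * (c * ‖x‖) ^ (-A)) :=
        mul_le_mul_of_nonneg_left hq1 (Real.rpow_nonneg hs.le _)
    _ = c₂ * (s ^ (-(d:ℝ)/α) * c ^ (-A)) * ‖x‖ ^ (-A) := by
        rw [Real.mul_rpow hc0.le hm0.le]; ring
    _ = c₂ * s * ‖x‖ ^ (-A) := by
        have h2 : c ^ (-A) = s ^ ((-(1:ℝ)/α) * (-A)) := (Real.rpow_mul hs.le _ _).symm
        rw [h2, ← Real.rpow_add hs,
          show (-(d:ℝ)/α + (-(1:ℝ)/α) * (-A)) = 1 by rw [hA]; field_simp; ring,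
          Real.rpow_one]

set_option maxHeartbeats 1000000 in
/-- Key finiteness in the tightness proof (Proposition 3.3): for
`α/β ≤ d < α(1+β)/β`, `0 < γ < 1+β−(d/α)β` and `p = (1+β)/(1+β−γ)`,
`∫_{ℝ^d} (∫_0^1 p_s(x)^p ds)^{(1+β)/p} dx < ∞`. -/
theorem stmt17 (d : ℕ) (hd : 1 ≤ d) (α β γ : ℝ) (hα0 : 0 < α) (hα2 : α ≤ 2)
    (hβ0 : 0 < β) (hβ1 : β ≤ 1)
    (hdim1 : α / β ≤ d) (hdim2 : (d : ℝ) < α * (1 + β) / β)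
    (q : EuclideanSpace ℝ (Fin d) → ℝ) (hqm : Measurable q) (hq0 : ∀ x, 0 ≤ q x)
    (c₂ : ℝ) (hc₂ : 0 < c₂) (hq : ∀ x, q x ≤ c₂ / (1 + ‖x‖ ^ ((d : ℝ) + α)))
    (hγ0 : 0 < γ) (hγ1 : γ < 1 + β - ((d : ℝ) / α) * β)
    (p : ℝ) (hp : p = (1 + β) / (1 + β - γ)) :
    ∫⁻ x : EuclideanSpace ℝ (Fin d),
      ENNReal.ofReal ((∫ s in (0:ℝ)..1, (pker d α q s x) ^ p) ^ ((1 + β) / p)) < ⊤ := by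
  -- basic numeric facts
  have hd0 : (0:ℝ) < d := by exact_mod_cast hd
  have hαd : α ≤ (d:ℝ) * β := (div_le_iff₀ hβ0).mp hdim1
  have hγβ : γ < β := by
    have h1 : (1:ℝ) ≤ (d:ℝ)/α * β := by
      rw [div_mul_eq_mul_div, le_div_iff₀ hα0, one_mul]; linarith
    linarith
  have h1βγ : (0:ℝ) < 1 + β - γ := by linarith
  have hp1 : 1 < p := by rw [hp, lt_div_iff₀ h1βγ]; linarith
  have hp0 : 0 < p := lt_trans one_pos hp1
  set r : ℝ := (1 + β) / p with hrdef
  have hrp : r = 1 + β - γ := by rw [hrdef, hp]; field_simp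
  have hr0 : 0 < r := by rw [hrp]; exact h1βγ
  have hpr : p * r = 1 + β := by rw [hrdef]; field_simp
  have hdpα : α < (d:ℝ) * p := by nlinarith
  set k : ℝ := (d:ℝ) * p / α with hkdef
  have hk1 : 1 < k := (one_lt_div hα0).mpr hdpα
  set A : ℝ := (d:ℝ) + α with hA
  have hA0 : 0 < A := by positivity
  set t : ℝ := ((d:ℝ) * p - α) * r with htdef
  have ht0 : 0 < t := mul_pos (by linarith) hr0
  have hdb : (d:ℝ) * β < α * (1 + β - γ) := by
    have h2 : (d:ℝ)/α * β < 1 + β - γ := by linarith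
    rw [div_mul_eq_mul_div, div_lt_iff₀ hα0] at h2
    linarith
  have htd : t < d := by
    have : t = (d:ℝ) * (p * r) - α * r := by rw [htdef]; ring
    rw [this, hpr, hrp]; nlinarith
  set b : ℝ := A * (1 + β) with hbdef
  have hb0 : 0 < b := by positivity
  have hdbb : (d:ℝ) < b := by rw [hbdef, hA]; nlinarith
  set K : ℝ := c₂ ^ p with hK
  have hK0 : 0 ≤ K := Real.rpow_nonneg hc₂.le _
  -- the inner integral as a set integral
  set G : EuclideanSpace ℝ (Fin d) → ℝ :=
    fun x => ∫ s in Ioc (0:ℝ) 1, pker d α q s x ^ p with hGdef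
  have hGeq : ∀ x, (∫ s in (0:ℝ)..1, pker d α q s x ^ p) = G x := fun x =>
    intervalIntegral.integral_of_le zero_le_one
  have hGnn : ∀ x, 0 ≤ G x := fun x =>
    setIntegral_nonneg measurableSet_Ioc fun s hs =>
      Real.rpow_nonneg (pker_nonneg hq0 hs.1.le x) _
  -- pointwise bounds on the integrand
  have hb1 : ∀ x : EuclideanSpace ℝ (Fin d), x ≠ 0 → ∀ s ∈ Ioc (0:ℝ) 1,
      pker d α q s x ^ p ≤ K * ‖x‖ ^ (-(A*p)) * s ^ p := by
    intro x hx s hs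
    have hm0 : 0 < ‖x‖ := norm_pos_iff.mpr hx
    have h1 := pker_le_decay hα0 hc₂ hq hx hs.1
    calc pker d α q s x ^ p ≤ (c₂ * s * ‖x‖ ^ (-A)) ^ p :=
          Real.rpow_le_rpow (pker_nonneg hq0 hs.1.le x) h1 hp0.le
      _ = K * ‖x‖ ^ (-(A*p)) * s ^ p := by
          rw [Real.mul_rpow (mul_nonneg hc₂.le hs.1.le) (Real.rpow_nonneg (norm_nonneg x) _),
            Real.mul_rpow hc₂.le hs.1.le, ← Real.rpow_mul (norm_nonneg x),
            show (-A) * p = -(A*p) by ring]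
          ring
  have hb2 : ∀ x : EuclideanSpace ℝ (Fin d), ∀ s ∈ Ioc (0:ℝ) 1,
      pker d α q s x ^ p ≤ K * s ^ (-k) := by
    intro x s hs
    have h1 := pker_le_const hα0 hc₂ hq x hs.1
    calc pker d α q s x ^ p ≤ (c₂ * s ^ (-(d:ℝ)/α)) ^ p :=
          Real.rpow_le_rpow (pker_nonneg hq0 hs.1.le x) h1 hp0.le
      _ = K * s ^ (-k) := by
          rw [Real.mul_rpow hc₂.le (Real.rpow_nonneg hs.1.le _),
            ← Real.rpow_mul hs.1.le,
            show (-(d:ℝ)/α) * p = -k by rw [hkdef]; ring]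
  -- 1-d integral facts
  have hI1 : ∀ a : ℝ, 0 < a → ∫ s in Ioc (0:ℝ) a, s ^ p = a ^ (p+1) / (p+1) := by
    intro a ha
    rw [← intervalIntegral.integral_of_le ha.le,
      integral_rpow (Or.inl (by linarith : (-1:ℝ) < p)),
      Real.zero_rpow (by positivity : p + 1 ≠ 0), sub_zero]
  have hJ1 : ∀ a : ℝ, 0 ≤ a → IntegrableOn (fun s : ℝ => s ^ p) (Ioc (0:ℝ) a) := by
    intro a ha
    rw [← intervalIntegrable_iff_integrableOn_Ioc_of_le ha]
    exact intervalIntegral.intervalIntegrable_rpow' (by linarith)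
  have hnot0 : ∀ a : ℝ, 0 < a → a ≤ 1 → (0:ℝ) ∉ Set.uIcc a 1 := by
    intro a ha ha1
    rw [Set.uIcc_of_le ha1, Set.mem_Icc]
    push_neg
    intro h; linarith
  have hJ2 : ∀ a : ℝ, 0 < a → a ≤ 1 → IntegrableOn (fun s : ℝ => s ^ (-k)) (Ioc a 1) := by
    intro a ha ha1
    rw [← intervalIntegrable_iff_integrableOn_Ioc_of_le ha1]
    exact intervalIntegral.intervalIntegrable_rpow (Or.inr (hnot0 a ha ha1))
  have hI2 : ∀ a : ℝ, 0 < a → a ≤ 1 → ∫ s in Ioc a 1, s ^ (-k) = (a^(1-k) - 1)/(k-1) := by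
    intro a ha ha1
    rw [← intervalIntegral.integral_of_le ha1,
      integral_rpow (Or.inr ⟨by intro h; rw [neg_eq_iff_eq_neg] at h; simp at h; linarith [hk1, h],
        hnot0 a ha ha1⟩)]
    rw [show -k + 1 = 1 - k by ring, Real.one_rpow,
      ← neg_div_neg_eq, neg_sub, neg_sub]
  -- far bound
  have hGfar : ∀ x : EuclideanSpace ℝ (Fin d), 1 ≤ ‖x‖ →
      G x ≤ K * ‖x‖ ^ (-(A*p)) / (p+1) := by
    intro x hx1
    have hx0 : x ≠ 0 := by
      intro h; rw [h, norm_zero] at hx1; linarith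
    have h1 : G x ≤ ∫ s in Ioc (0:ℝ) 1, K * ‖x‖ ^ (-(A*p)) * s ^ p := by
      refine integral_mono_of_nonneg ?_ ((hJ1 1 zero_le_one).const_mul _) ?_
      · exact (ae_restrict_iff' measurableSet_Ioc).mpr (Filter.Eventually.of_forall
          fun s hs => Real.rpow_nonneg (pker_nonneg hq0 hs.1.le x) _)
      · exact (ae_restrict_iff' measurableSet_Ioc).mpr (Filter.Eventually.of_forall
          fun s hs => hb1 x hx0 s hs)
    calc G x ≤ ∫ s in Ioc (0:ℝ) 1, K * ‖x‖ ^ (-(A*p)) * s ^ p := h1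
      _ = K * ‖x‖ ^ (-(A*p)) * (1 ^ (p+1) / (p+1)) := by
          rw [integral_const_mul, hI1 1 one_pos]
      _ = K * ‖x‖ ^ (-(A*p)) / (p+1) := by
          rw [Real.one_rpow]; ring
  -- near bound
  have hGnear : ∀ x : EuclideanSpace ℝ (Fin d), x ≠ 0 → ‖x‖ < 1 →
      G x ≤ (K * (1/(p+1) + 1/(k-1))) * ‖x‖ ^ (α - d*p) := by
    intro x hx0 hm1
    have hm0 : 0 < ‖x‖ := norm_pos_iff.mpr hx0
    set s₀ : ℝ := ‖x‖ ^ α with hs₀def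
    have hs₀0 : 0 < s₀ := Real.rpow_pos_of_pos hm0 α
    have hs₀1 : s₀ < 1 := Real.rpow_lt_one hm0.le hm1 hα0
    set h : ℝ → ℝ := fun s => if s ≤ s₀ then K * ‖x‖ ^ (-(A*p)) * s ^ p else K * s ^ (-k)
      with hhdef
    have hint1 : IntegrableOn h (Ioc 0 s₀) :=
      IntegrableOn.congr_fun ((hJ1 s₀ hs₀0.le).const_mul (K * ‖x‖ ^ (-(A*p))))
        (fun s hs => (if_pos hs.2).symm) measurableSet_Ioc
    have hint2 : IntegrableOn h (Ioc s₀ 1) :=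
      IntegrableOn.congr_fun ((hJ2 s₀ hs₀0 hs₀1.le).const_mul K)
        (fun s hs => (if_neg (not_le.mpr hs.1)).symm) measurableSet_Ioc
    have hhint : IntegrableOn h (Ioc 0 1) := by
      rw [← Set.Ioc_union_Ioc_eq_Ioc hs₀0.le hs₀1.le]
      exact hint1.union hint2
    have h1 : G x ≤ ∫ s in Ioc (0:ℝ) 1, h s := by
      refine integral_mono_of_nonneg ?_ hhint ?_
      · exact (ae_restrict_iff' measurableSet_Ioc).mpr (Filter.Eventually.of_forall
          fun s hs => Real.rpow_nonneg (pker_nonneg hq0 hs.1.le x) _)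
      · refine (ae_restrict_iff' measurableSet_Ioc).mpr (Filter.Eventually.of_forall
          fun s hs => ?_)
        rcases le_or_gt s s₀ with hss | hss
        · rw [hhdef]; simp only [if_pos hss]; exact hb1 x hx0 s hs
        · rw [hhdef]; simp only [if_neg (not_le.mpr hss)]; exact hb2 x s hs
    have h2 : ∫ s in Ioc (0:ℝ) 1, h s
        = (∫ s in Ioc (0:ℝ) s₀, h s) + ∫ s in Ioc s₀ 1, h s := by
      rw [← Set.Ioc_union_Ioc_eq_Ioc hs₀0.le hs₀1.le,
        setIntegral_union (Set.Ioc_disjoint_Ioc_of_le le_rfl) measurableSet_Ioc hint1 hint2]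
    have h3 : ∫ s in Ioc (0:ℝ) s₀, h s = K * ‖x‖ ^ (-(A*p)) * (s₀ ^ (p+1) / (p+1)) := by
      rw [setIntegral_congr_fun measurableSet_Ioc (fun s hs => if_pos hs.2),
        integral_const_mul, hI1 s₀ hs₀0]
    have h4 : ∫ s in Ioc s₀ 1, h s = K * ((s₀^(1-k) - 1)/(k-1)) := by
      rw [setIntegral_congr_fun measurableSet_Ioc
        (fun s hs => if_neg (not_le.mpr hs.1)),
        integral_const_mul, hI2 s₀ hs₀0 hs₀1.le]
    have hαk : α * k = (d:ℝ) * p := by rw [hkdef]; field_simp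
    have he1 : ‖x‖ ^ (-(A*p)) * s₀ ^ (p+1) = ‖x‖ ^ (α - d*p) := by
      rw [hs₀def, ← Real.rpow_mul hm0.le, ← Real.rpow_add hm0]
      congr 1
      rw [hA]; ring
    have he2 : s₀ ^ (1-k) = ‖x‖ ^ (α - d*p) := by
      rw [hs₀def, ← Real.rpow_mul hm0.le]
      congr 1
      rw [mul_sub, mul_one, hαk]
    calc G x ≤ ∫ s in Ioc (0:ℝ) 1, h s := h1
      _ = K * ‖x‖ ^ (-(A*p)) * (s₀ ^ (p+1) / (p+1)) + K * ((s₀^(1-k) - 1)/(k-1)) := by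
          rw [h2, h3, h4]
      _ ≤ K * (1/(p+1)) * (‖x‖ ^ (-(A*p)) * s₀ ^ (p+1))
            + K * (1/(k-1)) * s₀^(1-k) := by
          refine add_le_add (le_of_eq (by ring)) ?_
          have hX : (s₀^(1-k) - 1)/(k-1) ≤ s₀^(1-k)/(k-1) := by
            gcongr
            · linarith
          calc K * ((s₀^(1-k) - 1)/(k-1)) ≤ K * (s₀^(1-k)/(k-1)) :=
              mul_le_mul_of_nonneg_left hX hK0
            _ = K * (1/(k-1)) * s₀^(1-k) := by ring
      _ = (K * (1/(p+1) + 1/(k-1))) * ‖x‖ ^ (α - d*p) := by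
          rw [he1, he2]; ring
  -- outer integral
  haveI : Nontrivial (EuclideanSpace ℝ (Fin d)) :=
    Module.nontrivial_of_finrank_pos (R := ℝ)
      (by rw [finrank_euclideanSpace_fin]; exact hd)
  have hfr : (finrank ℝ (EuclideanSpace ℝ (Fin d)) : ℝ) = (d : ℝ) := by
    rw [finrank_euclideanSpace_fin]
  simp only [hGeq]
  rw [← lintegral_add_compl (fun x => ENNReal.ofReal (G x ^ r))
    (measurableSet_ball (x := (0 : EuclideanSpace ℝ (Fin d))) (ε := (1:ℝ)))]
  refine ENNReal.add_lt_top.2 ⟨?_, ?_⟩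
  · -- near the origin
    set C₀ : ℝ := K * (1/(p+1) + 1/(k-1)) with hC₀def
    have hC₀ : 0 ≤ C₀ := mul_nonneg hK0
      (add_nonneg (one_div_nonneg.mpr (by linarith)) (one_div_nonneg.mpr (by linarith)))
    have key : ∀ᵐ x ∂(volume.restrict (Metric.ball (0 : EuclideanSpace ℝ (Fin d)) 1)),
        ENNReal.ofReal (G x ^ r)
          ≤ ENNReal.ofReal (C₀ ^ r) * ENNReal.ofReal (‖x‖ ^ (-t)) := by
      have hae1 : ∀ᵐ x ∂(volume.restrict (Metric.ball (0 : EuclideanSpace ℝ (Fin d)) 1)),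
          x ∈ Metric.ball (0 : EuclideanSpace ℝ (Fin d)) 1 := ae_restrict_mem measurableSet_ball
      have hae2 : ∀ᵐ x ∂(volume.restrict (Metric.ball (0 : EuclideanSpace ℝ (Fin d)) 1)),
          x ≠ (0 : EuclideanSpace ℝ (Fin d)) := by
        rw [ae_iff]
        have hset : {x : EuclideanSpace ℝ (Fin d) | ¬ x ≠ 0} = {0} := by ext y; simp
        rw [hset]
        exact le_antisymm
          (le_trans (Measure.restrict_apply_le _ _)
            (le_of_eq (measure_singleton 0))) (by simp)
      filter_upwards [hae1, hae2] with x hx1 hx2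
      have hGb := hGnear x hx2 (mem_ball_zero_iff.mp hx1)
      have hcalc : G x ^ r ≤ C₀ ^ r * ‖x‖ ^ (-t) := by
        calc G x ^ r ≤ (C₀ * ‖x‖ ^ (α - d*p)) ^ r :=
              Real.rpow_le_rpow (hGnn x) hGb hr0.le
          _ = C₀ ^ r * ‖x‖ ^ (-t) := by
              rw [Real.mul_rpow hC₀ (Real.rpow_nonneg (norm_nonneg x) _),
                ← Real.rpow_mul (norm_nonneg x),
                show (α - (d:ℝ)*p) * r = -t by rw [htdef]; ring]
      calc ENNReal.ofReal (G x ^ r) ≤ ENNReal.ofReal (C₀ ^ r * ‖x‖ ^ (-t)) :=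
            ENNReal.ofReal_le_ofReal hcalc
        _ = ENNReal.ofReal (C₀ ^ r) * ENNReal.ofReal (‖x‖ ^ (-t)) :=
            ENNReal.ofReal_mul (Real.rpow_nonneg hC₀ _)
    calc ∫⁻ x in Metric.ball (0 : EuclideanSpace ℝ (Fin d)) 1, ENNReal.ofReal (G x ^ r)
        ≤ ∫⁻ x in Metric.ball (0 : EuclideanSpace ℝ (Fin d)) 1,
            ENNReal.ofReal (C₀ ^ r) * ENNReal.ofReal (‖x‖ ^ (-t)) := lintegral_mono_ae key
      _ = ENNReal.ofReal (C₀ ^ r)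
          * ∫⁻ x in Metric.ball (0 : EuclideanSpace ℝ (Fin d)) 1,
              ENNReal.ofReal (‖x‖ ^ (-t)) :=
            lintegral_const_mul' _ _ ENNReal.ofReal_ne_top
      _ < ⊤ := ENNReal.mul_lt_top ENNReal.ofReal_lt_top
            (aux_ball_finite volume ht0 (by rw [hfr]; exact htd))
  · -- far away
    set C₁ : ℝ := (K/(p+1)) ^ r * 2 ^ b with hC₁def
    have hKp : (0:ℝ) ≤ K/(p+1) := div_nonneg hK0 (by linarith)
    have hC₁ : 0 ≤ C₁ := mul_nonneg (Real.rpow_nonneg hKp _) (Real.rpow_nonneg (by norm_num) _)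
    have key : ∀ᵐ x ∂(volume.restrict ((Metric.ball (0 : EuclideanSpace ℝ (Fin d)) 1)ᶜ)),
        ENNReal.ofReal (G x ^ r)
          ≤ ENNReal.ofReal C₁ * ENNReal.ofReal ((1 + ‖x‖) ^ (-b)) := by
      have hae1 : ∀ᵐ x ∂(volume.restrict ((Metric.ball (0 : EuclideanSpace ℝ (Fin d)) 1)ᶜ)),
          x ∈ (Metric.ball (0 : EuclideanSpace ℝ (Fin d)) 1)ᶜ :=
        ae_restrict_mem measurableSet_ball.compl
      filter_upwards [hae1] with x hx1
      have hm1 : 1 ≤ ‖x‖ := by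
        rw [mem_compl_iff, mem_ball_zero_iff, not_lt] at hx1; exact hx1
      have hm0 : (0:ℝ) < ‖x‖ := lt_of_lt_of_le one_pos hm1
      have hGb : G x ≤ (K/(p+1)) * ‖x‖ ^ (-(A*p)) := by
        calc G x ≤ K * ‖x‖ ^ (-(A*p)) / (p+1) := hGfar x hm1
          _ = (K/(p+1)) * ‖x‖ ^ (-(A*p)) := by ring
      have hstep1 : G x ^ r ≤ (K/(p+1)) ^ r * ‖x‖ ^ (-b) := by
        calc G x ^ r ≤ ((K/(p+1)) * ‖x‖ ^ (-(A*p))) ^ r :=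
              Real.rpow_le_rpow (hGnn x) hGb hr0.le
          _ = (K/(p+1)) ^ r * ‖x‖ ^ (-b) := by
              rw [Real.mul_rpow hKp (Real.rpow_nonneg (norm_nonneg x) _),
                ← Real.rpow_mul (norm_nonneg x),
                show (-(A*p)) * r = -b by rw [hbdef, ← hpr]; ring]
      have hstep2 : ‖x‖ ^ (-b) ≤ 2 ^ b * (1 + ‖x‖) ^ (-b) := by
        have hmb : (0:ℝ) < ‖x‖ ^ b := Real.rpow_pos_of_pos hm0 _
        have h1mb : (0:ℝ) < (1 + ‖x‖) ^ b := Real.rpow_pos_of_pos (by linarith) _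
        have h2m : (1 + ‖x‖) ^ b ≤ (2 * ‖x‖) ^ b :=
          Real.rpow_le_rpow (by linarith) (by linarith) hb0.le
        rw [Real.rpow_neg (norm_nonneg x), Real.rpow_neg (by linarith : (0:ℝ) ≤ 1 + ‖x‖),
          inv_eq_one_div, inv_eq_one_div, mul_one_div, div_le_div_iff₀ hmb h1mb]
        calc 1 * (1 + ‖x‖) ^ b ≤ (2 * ‖x‖) ^ b := by rw [one_mul]; exact h2m
          _ = 2 ^ b * ‖x‖ ^ b := Real.mul_rpow (by norm_num) (norm_nonneg x)
      have hcalc : G x ^ r ≤ C₁ * (1 + ‖x‖) ^ (-b) := by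
        calc G x ^ r ≤ (K/(p+1)) ^ r * ‖x‖ ^ (-b) := hstep1
          _ ≤ (K/(p+1)) ^ r * (2 ^ b * (1 + ‖x‖) ^ (-b)) :=
              mul_le_mul_of_nonneg_left hstep2 (Real.rpow_nonneg hKp _)
          _ = C₁ * (1 + ‖x‖) ^ (-b) := by rw [hC₁def]; ring
      calc ENNReal.ofReal (G x ^ r) ≤ ENNReal.ofReal (C₁ * (1 + ‖x‖) ^ (-b)) :=
            ENNReal.ofReal_le_ofReal hcalc
        _ = ENNReal.ofReal C₁ * ENNReal.ofReal ((1 + ‖x‖) ^ (-b)) :=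
            ENNReal.ofReal_mul hC₁
    calc ∫⁻ x in (Metric.ball (0 : EuclideanSpace ℝ (Fin d)) 1)ᶜ, ENNReal.ofReal (G x ^ r)
        ≤ ∫⁻ x in (Metric.ball (0 : EuclideanSpace ℝ (Fin d)) 1)ᶜ,
            ENNReal.ofReal C₁ * ENNReal.ofReal ((1 + ‖x‖) ^ (-b)) := lintegral_mono_ae key
      _ = ENNReal.ofReal C₁
          * ∫⁻ x in (Metric.ball (0 : EuclideanSpace ℝ (Fin d)) 1)ᶜ,
              ENNReal.ofReal ((1 + ‖x‖) ^ (-b)) :=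
            lintegral_const_mul' _ _ ENNReal.ofReal_ne_top
      _ ≤ ENNReal.ofReal C₁
          * ∫⁻ x : EuclideanSpace ℝ (Fin d), ENNReal.ofReal ((1 + ‖x‖) ^ (-b)) := by
            gcongr
            exact Measure.restrict_le_self
      _ < ⊤ := ENNReal.mul_lt_top ENNReal.ofReal_lt_top
            (finite_integral_one_add_norm (by rw [hfr]; exact hdbb))
end

section
/- Let d ≥ 1 be an integer and 0 < β < 1 with 2/β < d < 2(1+β)/β, let p_t(x) = (4πt)^{−d/2} exp(−‖x‖²/(4t)) be the Gaussian heat kernel on ℝ^d, set F_T = T^{(2+β−(d/2)β)/(1+β)} for T > 0, and let φ : ℝ^d → [0,∞) be a Schwartz function. Then lim_{T→∞} (T²/F_T²) ∫_{ℝ^d} ∫_0^1 ∫_0^r φ(x) · (p_{T(r−u)} * φ)(x) du dr dx = 0. -/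
open MeasureTheory Filter
open scoped Topology

/-- The Gaussian heat kernel on `ℝ^d`: `p_t(x) = (4πt)^{−d/2} exp(−‖x‖²/(4t))`. -/
noncomputable def heatKer (d : ℕ) (t : ℝ) (x : EuclideanSpace ℝ (Fin d)) : ℝ :=
  (4 * Real.pi * t) ^ (-(d : ℝ) / 2) * Real.exp (-‖x‖ ^ 2 / (4 * t))

lemma heatKer_nonneg {d : ℕ} {t : ℝ} (ht : 0 ≤ t) (x : EuclideanSpace ℝ (Fin d)) :
    0 ≤ heatKer d t x :=
  mul_nonneg (Real.rpow_nonneg (by positivity) _) (Real.exp_nonneg _)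

lemma heatKer_le {d : ℕ} {t : ℝ} (ht : 0 < t) (x : EuclideanSpace ℝ (Fin d)) :
    heatKer d t x ≤ (4 * Real.pi * t) ^ (-(d : ℝ) / 2) := by
  have h1 : Real.exp (-‖x‖ ^ 2 / (4 * t)) ≤ 1 :=
    Real.exp_le_one_iff.mpr
      (div_nonpos_of_nonpos_of_nonneg (neg_nonpos.mpr (by positivity)) (by positivity))
  calc heatKer d t x ≤ (4 * Real.pi * t) ^ (-(d : ℝ) / 2) * 1 :=
        mul_le_mul_of_nonneg_left h1 (Real.rpow_nonneg (by positivity) _)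
    _ = _ := mul_one _

lemma heatKer_zero {d : ℕ} (hd : 1 ≤ d) (x : EuclideanSpace ℝ (Fin d)) :
    heatKer d 0 x = 0 := by
  have hd0 : (-(d : ℝ) / 2) ≠ 0 := by
    have : (1:ℝ) ≤ d := by exact_mod_cast hd
    intro h; rw [div_eq_zero_iff] at h; simp at h; linarith
  unfold heatKer
  rw [mul_zero, Real.zero_rpow hd0, zero_mul]

lemma integrable_gauss {d : ℕ} {b : ℝ} (hb : 0 < b) :
    Integrable (fun y : EuclideanSpace ℝ (Fin d) => Real.exp (-b * ‖y‖ ^ 2)) := by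
  have h := (GaussianFourier.integrable_cexp_neg_mul_sq_norm_add
      (V := EuclideanSpace ℝ (Fin d)) (b := (b : ℂ)) (by simpa using hb) 0 0).norm
  convert h using 2 with y
  simp [Complex.norm_exp, ← Complex.ofReal_pow]

lemma integrable_heatKer {d : ℕ} {t : ℝ} (ht : 0 < t) :
    Integrable (fun y : EuclideanSpace ℝ (Fin d) => heatKer d t y) := by
  have hb : (0:ℝ) < 1 / (4 * t) := by positivity
  have h1 : ∀ y : EuclideanSpace ℝ (Fin d),
      heatKer d t y = (4 * Real.pi * t) ^ (-(d : ℝ) / 2) *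
        Real.exp (-(1 / (4 * t)) * ‖y‖ ^ 2) := by
    intro y; unfold heatKer; congr 1; ring_nf
  simp only [h1]
  exact (integrable_gauss hb).const_mul _

lemma integral_heatKer {d : ℕ} {t : ℝ} (ht : 0 < t) :
    ∫ y : EuclideanSpace ℝ (Fin d), heatKer d t y = 1 := by
  have hb : (0:ℝ) < 1 / (4 * t) := by positivity
  have h1 : ∀ y : EuclideanSpace ℝ (Fin d),
      heatKer d t y = (4 * Real.pi * t) ^ (-(d : ℝ) / 2) *
        Real.exp (-(1 / (4 * t)) * ‖y‖ ^ 2) := by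
    intro y; unfold heatKer; congr 1; ring_nf
  simp only [h1]
  rw [integral_const_mul, GaussianFourier.integral_rexp_neg_mul_sq_norm hb]
  rw [finrank_euclideanSpace_fin]
  have h2 : Real.pi / (1 / (4 * t)) = 4 * Real.pi * t := by
    field_simp
  rw [h2]
  have hx : (0:ℝ) < 4 * Real.pi * t := by positivity
  rw [← Real.rpow_add hx, show (-(d:ℝ)/2 + (d:ℝ)/2) = 0 by ring, Real.rpow_zero]

/-- Bound function: minimum of a constant and a power decay. -/
noncomputable def hFun (d : ℕ) (M cI : ℝ) (s : ℝ) : ℝ := min M (cI * s ^ (-(d : ℝ) / 2))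

lemma hFun_nonneg {d : ℕ} {M cI : ℝ} (hM : 0 ≤ M) (hcI : 0 ≤ cI) {s : ℝ} (hs : 0 ≤ s) :
    0 ≤ hFun d M cI s :=
  le_min hM (mul_nonneg hcI (Real.rpow_nonneg hs _))

lemma hFun_le {d : ℕ} {M cI : ℝ} (s : ℝ) : hFun d M cI s ≤ M := min_le_left _ _

lemma hFun_intervalIntegrable {d : ℕ} {M cI : ℝ} (hM : 0 ≤ M) (hcI : 0 ≤ cI)
    {a b : ℝ} (ha : 0 ≤ a) (hab : a ≤ b) :
    IntervalIntegrable (hFun d M cI) volume a b := by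
  rw [intervalIntegrable_iff_integrableOn_Ioc_of_le hab]
  have hcont : ContinuousOn (hFun d M cI) (Set.Ioc a b) := by
    have h1 : ContinuousOn (fun s : ℝ => cI * s ^ (-(d:ℝ)/2)) (Set.Ioc a b) :=
      continuousOn_const.mul (ContinuousOn.rpow_const continuousOn_id
        (fun x hx => Or.inl (ne_of_gt (lt_of_le_of_lt ha hx.1))))
    exact continuousOn_const.inf h1
  refine ⟨hcont.aestronglyMeasurable measurableSet_Ioc,
    HasFiniteIntegral.restrict_of_bounded (C := M) measure_Ioc_lt_top ?_⟩
  filter_upwards [ae_restrict_mem measurableSet_Ioc] with s hs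
  rw [Real.norm_eq_abs, abs_le]
  exact ⟨by nlinarith [hFun_nonneg (d := d) hM hcI (le_of_lt (lt_of_le_of_lt ha hs.1))],
    hFun_le s⟩

lemma hFun_integral_le {d : ℕ} {M cI : ℝ} (hM : 0 ≤ M) (hcI : 0 ≤ cI)
    (hd2 : (2 : ℝ) < d) {s₀ : ℝ} (hs₀ : 0 ≤ s₀) :
    ∫ s in (0:ℝ)..s₀, hFun d M cI s ≤ M + cI * (2 / ((d : ℝ) - 2)) := by
  have hC2 : 0 ≤ cI * (2 / ((d : ℝ) - 2)) :=
    mul_nonneg hcI (div_nonneg two_pos.le (by linarith))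
  by_cases hs1 : s₀ ≤ 1
  · calc ∫ s in (0:ℝ)..s₀, hFun d M cI s
        ≤ ∫ _ in (0:ℝ)..s₀, M :=
          intervalIntegral.integral_mono_on hs₀
            (hFun_intervalIntegrable hM hcI le_rfl hs₀) intervalIntegrable_const
            (fun x _ => hFun_le x)
      _ = s₀ * M := by simp [mul_comm]
      _ ≤ M + cI * (2 / ((d : ℝ) - 2)) := by nlinarith
  · push_neg at hs1
    have h0notin : (0:ℝ) ∉ Set.uIcc 1 s₀ := by
      rw [Set.uIcc_of_le hs1.le]
      intro h; exact absurd h.1 (by norm_num)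
    have hene : -(d : ℝ) / 2 ≠ -1 := by
      intro h
      have : (d : ℝ) = 2 := by linarith [congrArg (fun x : ℝ => x * 2) h]
      linarith
    have hsplit : ∫ s in (0:ℝ)..s₀, hFun d M cI s
        = (∫ s in (0:ℝ)..1, hFun d M cI s) + ∫ s in (1:ℝ)..s₀, hFun d M cI s :=
      (intervalIntegral.integral_add_adjacent_intervals
        (hFun_intervalIntegrable hM hcI le_rfl zero_le_one)
        (hFun_intervalIntegrable hM hcI zero_le_one hs1.le)).symm
    have hb1 : ∫ s in (0:ℝ)..1, hFun d M cI s ≤ M := by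
      calc ∫ s in (0:ℝ)..1, hFun d M cI s
          ≤ ∫ _ in (0:ℝ)..1, M :=
            intervalIntegral.integral_mono_on zero_le_one
              (hFun_intervalIntegrable hM hcI le_rfl zero_le_one) intervalIntegrable_const
              (fun x _ => hFun_le x)
        _ = M := by simp
    have hrpowInt : IntervalIntegrable (fun s : ℝ => cI * s ^ (-(d:ℝ)/2)) volume 1 s₀ :=
      (intervalIntegral.intervalIntegrable_rpow (Or.inr h0notin)).const_mul cI
    have hb2 : ∫ s in (1:ℝ)..s₀, hFun d M cI s ≤ cI * (2 / ((d : ℝ) - 2)) := by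
      calc ∫ s in (1:ℝ)..s₀, hFun d M cI s
          ≤ ∫ s in (1:ℝ)..s₀, cI * s ^ (-(d:ℝ)/2) :=
            intervalIntegral.integral_mono_on hs1.le
              (hFun_intervalIntegrable hM hcI zero_le_one hs1.le) hrpowInt
              (fun x _ => min_le_right _ _)
        _ = cI * ∫ s in (1:ℝ)..s₀, s ^ (-(d:ℝ)/2) := by
            rw [intervalIntegral.integral_const_mul]
        _ ≤ cI * (2 / ((d : ℝ) - 2)) := by
            apply mul_le_mul_of_nonneg_left _ hcI
            rw [integral_rpow (Or.inr ⟨hene, h0notin⟩)]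
            have he1 : -(d:ℝ)/2 + 1 < 0 := by linarith
            have hpow : 0 ≤ s₀ ^ (-(d:ℝ)/2 + 1) := Real.rpow_nonneg (by linarith) _
            rw [Real.one_rpow, div_le_iff_of_neg he1]
            have : 2 / ((d:ℝ) - 2) * (-(d:ℝ)/2 + 1) = -1 := by
              rw [div_mul_eq_mul_div, div_eq_iff (by linarith : (d:ℝ) - 2 ≠ 0)]
              ring
            rw [this]; linarith
    linarith [hsplit, hb1, hb2]

section JBounds
variable {d : ℕ} (φ : SchwartzMap (EuclideanSpace ℝ (Fin d)) ℝ)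

lemma J_nonneg (hφ0 : ∀ x, 0 ≤ φ x) {t : ℝ} (ht : 0 ≤ t) (x : EuclideanSpace ℝ (Fin d)) :
    0 ≤ ∫ y, heatKer d t (x - y) * φ y :=
  integral_nonneg fun y => mul_nonneg (heatKer_nonneg ht _) (hφ0 y)

lemma J_le_M (hφ0 : ∀ x, 0 ≤ φ x) {M : ℝ} (hM : ∀ y, φ y ≤ M)
    {t : ℝ} (ht : 0 < t) (x : EuclideanSpace ℝ (Fin d)) :
    ∫ y, heatKer d t (x - y) * φ y ≤ M := by
  have h1 : Integrable (fun y => heatKer d t (x - y)) :=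
    (integrable_heatKer ht).comp_sub_left x
  calc ∫ y, heatKer d t (x - y) * φ y
      ≤ ∫ y, heatKer d t (x - y) * M :=
        integral_mono_of_nonneg
          (Filter.Eventually.of_forall fun y => mul_nonneg (heatKer_nonneg ht.le _) (hφ0 y))
          (h1.mul_const M)
          (Filter.Eventually.of_forall fun y =>
            mul_le_mul_of_nonneg_left (hM y) (heatKer_nonneg ht.le _))
    _ = (∫ y, heatKer d t (x - y)) * M := integral_mul_const _ _
    _ = M := by
        rw [integral_sub_left_eq_self (heatKer d t) volume x, integral_heatKer ht, one_mul]

lemma J_le_pow (hφ0 : ∀ x, 0 ≤ φ x) {t : ℝ} (ht : 0 < t) (x : EuclideanSpace ℝ (Fin d)) :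
    ∫ y, heatKer d t (x - y) * φ y
      ≤ ((4 * Real.pi) ^ (-(d : ℝ) / 2) * ∫ y, φ y) * t ^ (-(d : ℝ) / 2) := by
  calc ∫ y, heatKer d t (x - y) * φ y
      ≤ ∫ y, (4 * Real.pi * t) ^ (-(d : ℝ) / 2) * φ y :=
        integral_mono_of_nonneg
          (Filter.Eventually.of_forall fun y => mul_nonneg (heatKer_nonneg ht.le _) (hφ0 y))
          (φ.integrable.const_mul _)
          (Filter.Eventually.of_forall fun y =>
            mul_le_mul_of_nonneg_right (heatKer_le ht _) (hφ0 y))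
    _ = (4 * Real.pi * t) ^ (-(d : ℝ) / 2) * ∫ y, φ y := integral_const_mul _ _
    _ = ((4 * Real.pi) ^ (-(d : ℝ) / 2) * ∫ y, φ y) * t ^ (-(d : ℝ) / 2) := by
        rw [Real.mul_rpow (by positivity) ht.le]; ring

lemma J_le_hFun (hd : 1 ≤ d) (hφ0 : ∀ x, 0 ≤ φ x) {M : ℝ} (hM0 : 0 ≤ M) (hM : ∀ y, φ y ≤ M)
    {t : ℝ} (ht : 0 ≤ t) (x : EuclideanSpace ℝ (Fin d)) :
    ∫ y, heatKer d t (x - y) * φ y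
      ≤ hFun d M ((4 * Real.pi) ^ (-(d : ℝ) / 2) * ∫ y, φ y) t := by
  rcases eq_or_lt_of_le ht with h0 | htpos
  · have hd0 : (-(d : ℝ) / 2) ≠ 0 := by
      have : (1:ℝ) ≤ d := by exact_mod_cast hd
      intro h; rw [div_eq_zero_iff] at h; simp at h; linarith
    rw [← h0]
    calc ∫ y, heatKer d 0 (x - y) * φ y = 0 := by
          simp only [heatKer_zero hd, zero_mul, integral_zero]
      _ ≤ hFun d M ((4 * Real.pi) ^ (-(d : ℝ) / 2) * ∫ y, φ y) 0 := by
          unfold hFun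
          rw [Real.zero_rpow hd0, mul_zero]
          exact le_min hM0 le_rfl
  · exact le_min (J_le_M φ hφ0 hM htpos x) (J_le_pow φ hφ0 htpos x)

end JBounds

/-- Vanishing of the term `I₂(T)` (3.24) in the Brownian case: with the norming
`F_T = T^{(2+β−(d/2)β)/(1+β)}` and a nonnegative Schwartz function `φ`,
`(T²/F_T²) ∫_{ℝ^d} ∫_0^1 ∫_0^r φ(x) (p_{T(r−u)} * φ)(x) du dr dx → 0` as `T → ∞`. -/
theorem stmt19 (d : ℕ) (hd : 1 ≤ d) (β : ℝ) (hβ0 : 0 < β) (hβ1 : β < 1)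
    (hdim1 : 2 / β < d) (hdim2 : (d : ℝ) < 2 * (1 + β) / β)
    (φ : SchwartzMap (EuclideanSpace ℝ (Fin d)) ℝ) (hφ0 : ∀ x, 0 ≤ φ x) :
    Filter.Tendsto (fun T : ℝ =>
        T ^ 2 / (T ^ ((2 + β - ((d : ℝ) / 2) * β) / (1 + β))) ^ 2 *
          ∫ x : EuclideanSpace ℝ (Fin d), ∫ r in (0:ℝ)..1, ∫ u in (0:ℝ)..r,
            φ x * ∫ y : EuclideanSpace ℝ (Fin d), heatKer d (T * (r - u)) (x - y) * φ y)
      atTop (𝓝 0) := by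
  -- constants
  obtain ⟨M, hM0', hMdecay⟩ := φ.decay 0 0
  have hMb : ∀ y, φ y ≤ M := by
    intro y
    have h := hMdecay y
    simp only [pow_zero, one_mul, norm_iteratedFDeriv_zero] at h
    exact le_trans (le_abs_self _) (by rwa [Real.norm_eq_abs] at h)
  have hM0 : 0 ≤ M := hM0'.le
  set Iφ : ℝ := ∫ y, φ y with hIφdef
  have hIφ0 : 0 ≤ Iφ := integral_nonneg hφ0
  set cI : ℝ := (4 * Real.pi) ^ (-(d : ℝ) / 2) * Iφ with hcIdef
  have hcI0 : 0 ≤ cI := mul_nonneg (Real.rpow_nonneg (by positivity) _) hIφ0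
  have hd2 : (2 : ℝ) < d := by
    have h1 : (2:ℝ) < 2 / β := by rw [lt_div_iff₀ hβ0]; nlinarith
    linarith
  set C : ℝ := M + cI * (2 / ((d : ℝ) - 2)) with hCdef
  have hC0 : 0 ≤ C := by
    have h : 0 ≤ cI * (2 / ((d : ℝ) - 2)) :=
      mul_nonneg hcI0 (div_nonneg two_pos.le (by linarith))
    rw [hCdef]; linarith
  set κ : ℝ := (2 + β - ((d : ℝ) / 2) * β) / (1 + β) with hκdef
  have hκ : 1 / 2 < κ := by
    rw [hκdef, lt_div_iff₀ (by linarith : (0:ℝ) < 1 + β)]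
    rw [lt_div_iff₀ hβ0] at hdim2
    nlinarith
  -- nonnegativity of the inner double time integral
  have Gnonneg : ∀ T : ℝ, 0 < T → ∀ x : EuclideanSpace ℝ (Fin d),
      0 ≤ ∫ r in (0:ℝ)..1, ∫ u in (0:ℝ)..r,
        φ x * ∫ y, heatKer d (T * (r - u)) (x - y) * φ y := by
    intro T hT x
    apply intervalIntegral.integral_nonneg zero_le_one
    intro r hr
    apply intervalIntegral.integral_nonneg hr.1
    intro u hu
    exact mul_nonneg (hφ0 x)
      (J_nonneg φ hφ0 (mul_nonneg hT.le (by linarith [hu.2])) x)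
  -- the key quantitative bound
  have mainbound : ∀ T : ℝ, 1 ≤ T →
      (∫ x : EuclideanSpace ℝ (Fin d), ∫ r in (0:ℝ)..1, ∫ u in (0:ℝ)..r,
          φ x * ∫ y, heatKer d (T * (r - u)) (x - y) * φ y) ≤ Iφ * (T⁻¹ * C) := by
    intro T hT
    have hT0 : (0:ℝ) < T := lt_of_lt_of_le one_pos hT
    -- bound on the u-integral
    have uBound : ∀ x : EuclideanSpace ℝ (Fin d), ∀ r : ℝ, r ∈ Set.Ioc (0:ℝ) 1 →
        (∫ u in (0:ℝ)..r, ∫ y, heatKer d (T * (r - u)) (x - y) * φ y) ≤ T⁻¹ * C := by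
      intro x r hr
      have hr0 : (0:ℝ) ≤ r := hr.1.le
      have hTr0 : (0:ℝ) ≤ T * r := mul_nonneg hT0.le hr0
      have step1 : (∫ u in (0:ℝ)..r, ∫ y, heatKer d (T * (r - u)) (x - y) * φ y)
          ≤ ∫ u in (0:ℝ)..r, hFun d M cI (T * (r - u)) := by
        rw [intervalIntegral.integral_of_le hr0, intervalIntegral.integral_of_le hr0]
        apply integral_mono_of_nonneg
        · filter_upwards [ae_restrict_mem measurableSet_Ioc] with u hu
          exact J_nonneg φ hφ0 (mul_nonneg hT0.le (by linarith [hu.2])) x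
        · have i1 : IntervalIntegrable (hFun d M cI) volume 0 (T * r) :=
            hFun_intervalIntegrable hM0 hcI0 le_rfl hTr0
          have i2 := i1.comp_mul_left (c := T)
          rw [zero_div, mul_div_cancel_left₀ _ (ne_of_gt hT0)] at i2
          have i3 := i2.comp_sub_left r
          simp only [sub_zero, sub_self] at i3
          exact (intervalIntegrable_iff_integrableOn_Ioc_of_le hr0).mp i3.symm
        · filter_upwards [ae_restrict_mem measurableSet_Ioc] with u hu
          exact J_le_hFun φ hd hφ0 hM0 hMb
            (mul_nonneg hT0.le (by linarith [hu.2])) x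
      have step2 : (∫ u in (0:ℝ)..r, hFun d M cI (T * (r - u)))
          = T⁻¹ * ∫ s in (0:ℝ)..(T * r), hFun d M cI s := by
        have e1 : (∫ u in (0:ℝ)..r, hFun d M cI (T * (r - u)))
            = ∫ u in (0:ℝ)..r, (fun v => hFun d M cI (T * v)) (r - u) := rfl
        rw [e1, intervalIntegral.integral_comp_sub_left (fun v => hFun d M cI (T * v)) r]
        simp only [sub_self, sub_zero]
        rw [intervalIntegral.integral_comp_mul_left (fun s => hFun d M cI s) (ne_of_gt hT0)]
        simp [smul_eq_mul]
      have step3 : T⁻¹ * (∫ s in (0:ℝ)..(T * r), hFun d M cI s) ≤ T⁻¹ * C :=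
        mul_le_mul_of_nonneg_left (hFun_integral_le hM0 hcI0 hd2 hTr0)
          (inv_nonneg.mpr hT0.le)
      calc (∫ u in (0:ℝ)..r, ∫ y, heatKer d (T * (r - u)) (x - y) * φ y)
          ≤ ∫ u in (0:ℝ)..r, hFun d M cI (T * (r - u)) := step1
        _ = T⁻¹ * ∫ s in (0:ℝ)..(T * r), hFun d M cI s := step2
        _ ≤ T⁻¹ * C := step3
    -- bound on the r-integral, for each x
    have Gle : ∀ x : EuclideanSpace ℝ (Fin d),
        (∫ r in (0:ℝ)..1, ∫ u in (0:ℝ)..r,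
          φ x * ∫ y, heatKer d (T * (r - u)) (x - y) * φ y) ≤ φ x * (T⁻¹ * C) := by
      intro x
      rw [intervalIntegral.integral_of_le zero_le_one]
      calc (∫ r in Set.Ioc (0:ℝ) 1, ∫ u in (0:ℝ)..r,
            φ x * ∫ y, heatKer d (T * (r - u)) (x - y) * φ y)
          ≤ ∫ _ in Set.Ioc (0:ℝ) 1, φ x * (T⁻¹ * C) := by
            apply integral_mono_of_nonneg
            · filter_upwards [ae_restrict_mem measurableSet_Ioc] with r hr
              apply intervalIntegral.integral_nonneg hr.1.le
              intro u hu
              exact mul_nonneg (hφ0 x)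
                (J_nonneg φ hφ0 (mul_nonneg hT0.le (by linarith [hu.2])) x)
            · exact integrableOn_const measure_Ioc_lt_top.ne
            · filter_upwards [ae_restrict_mem measurableSet_Ioc] with r hr
              rw [intervalIntegral.integral_const_mul]
              exact mul_le_mul_of_nonneg_left (uBound x r hr) (hφ0 x)
        _ = φ x * (T⁻¹ * C) := by simp
    calc (∫ x : EuclideanSpace ℝ (Fin d), ∫ r in (0:ℝ)..1, ∫ u in (0:ℝ)..r,
          φ x * ∫ y, heatKer d (T * (r - u)) (x - y) * φ y)
        ≤ ∫ x : EuclideanSpace ℝ (Fin d), φ x * (T⁻¹ * C) :=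
          integral_mono_of_nonneg
            (Filter.Eventually.of_forall fun x => Gnonneg T hT0 x)
            (φ.integrable.mul_const _)
            (Filter.Eventually.of_forall Gle)
      _ = Iφ * (T⁻¹ * C) := integral_mul_const _ _
  -- squeeze
  apply squeeze_zero' (g := fun T : ℝ => (Iφ * C) * T ^ (1 - 2 * κ))
  · filter_upwards [eventually_ge_atTop (1:ℝ)] with T hT
    have hT0 : (0:ℝ) < T := lt_of_lt_of_le one_pos hT
    exact mul_nonneg (by positivity) (integral_nonneg (Gnonneg T hT0))
  · filter_upwards [eventually_ge_atTop (1:ℝ)] with T hT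
    have hT0 : (0:ℝ) < T := lt_of_lt_of_le one_pos hT
    have key2 : T ^ 2 / (T ^ κ) ^ 2 * T⁻¹ = T ^ (1 - 2 * κ) := by
      have h1 : ((T ^ κ) ^ 2 : ℝ) = T ^ (κ * 2) := by
        rw [← Real.rpow_natCast (T ^ κ) 2, ← Real.rpow_mul hT0.le]
        norm_num
      have h2 : (T : ℝ) ^ (2:ℕ) = T ^ ((2:ℝ)) := by
        rw [← Real.rpow_natCast T 2]; norm_num
      rw [h1, h2, div_eq_mul_inv, ← Real.rpow_neg hT0.le, ← Real.rpow_add hT0,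
        ← Real.rpow_neg_one T, ← Real.rpow_add hT0]
      congr 1; ring
    have prefnn : (0:ℝ) ≤ T ^ 2 / (T ^ κ) ^ 2 := by positivity
    calc T ^ 2 / (T ^ κ) ^ 2 *
          (∫ x : EuclideanSpace ℝ (Fin d), ∫ r in (0:ℝ)..1, ∫ u in (0:ℝ)..r,
            φ x * ∫ y, heatKer d (T * (r - u)) (x - y) * φ y)
        ≤ T ^ 2 / (T ^ κ) ^ 2 * (Iφ * (T⁻¹ * C)) :=
          mul_le_mul_of_nonneg_left (mainbound T hT) prefnn
      _ = (Iφ * C) * (T ^ 2 / (T ^ κ) ^ 2 * T⁻¹) := by ring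
      _ = (Iφ * C) * T ^ (1 - 2 * κ) := by rw [key2]
  · have hexp : 1 - 2 * κ < 0 := by linarith
    have h1 : Filter.Tendsto (fun T : ℝ => T ^ (1 - 2 * κ)) atTop (𝓝 0) := by
      rw [show 1 - 2 * κ = -(2 * κ - 1) by ring]
      exact tendsto_rpow_neg_atTop (by linarith)
    simpa using h1.const_mul (Iφ * C)
end
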